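/- Let X be a metric space with a consistent convex geodesic bicombing σ. Then Σ(A,B,t) = cco(⋃_{a∈A} ⋃_{b∈B} {σ(a,b,t)}) defines a conical geodesic bicombing on the space CB(X) of nonempty closed bounded σ-convex subsets of X equipped with the Hausdorff metric: Σ(A,B,·) is a linearly reparametrized geodesic from A to B, and d_H(Σ(A,B,t), Σ(C,D,t)) ≤ (1−t)·d_H(A,C) + t·d_H(B,D) for all A,B,C,D ∈ CB(X) and t ∈ [0,1]. -/

import Mathlib

/-- A set is σ-convex if it is closed under the bicombing σ for t ∈ [0,1]. -/
def SigmaConvex {X : Type*} [MetricSpace X] (σ : X → X → ℝ → X) (C : Set X) : Prop :=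
  ∀ x ∈ C, ∀ y ∈ C, ∀ t ∈ Set.Icc (0:ℝ) 1, σ x y t ∈ C

/-- Closed σ-convex hull. -/
def cco {X : Type*} [MetricSpace X] (σ : X → X → ℝ → X) (A : Set X) : Set X :=
  ⋂₀ {C : Set X | IsClosed C ∧ SigmaConvex σ C ∧ A ⊆ C}

namespace BicombAux

open Metric Set

variable {X : Type*} [MetricSpace X] {σ : X → X → ℝ → X}

lemma subset_cco (A : Set X) : A ⊆ cco σ A := by
  intro x hx
  rw [cco, Set.mem_sInter]
  exact fun C hC => hC.2.2 hx

lemma isClosed_cco (A : Set X) : IsClosed (cco σ A) :=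
  isClosed_sInter fun C hC => hC.1

lemma sigmaConvex_cco (A : Set X) : SigmaConvex σ (cco σ A) := by
  intro x hx y hy t ht
  rw [cco, Set.mem_sInter] at *
  exact fun C hC => hC.2.1 x (hx C hC) y (hy C hC) t ht

lemma cco_subset {A C : Set X} (hcl : IsClosed C) (hcv : SigmaConvex σ C) (hsub : A ⊆ C) :
    cco σ A ⊆ C :=
  Set.sInter_subset_of_mem ⟨hcl, hcv, hsub⟩

lemma cco_eq_self {A : Set X} (hcl : IsClosed A) (hcv : SigmaConvex σ A) : cco σ A = A :=
  le_antisymm (cco_subset hcl hcv subset_rfl) (subset_cco A)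

lemma sigma_self (h0 : ∀ x y, σ x y 0 = x)
    (hgeo : ∀ x y, ∀ s ∈ Set.Icc (0:ℝ) 1, ∀ t ∈ Set.Icc (0:ℝ) 1,
      dist (σ x y s) (σ x y t) = |t - s| * dist x y) :
    ∀ x : X, ∀ t ∈ Set.Icc (0:ℝ) 1, σ x x t = x := by
  intro x t ht
  have h := hgeo x x 0 ⟨le_refl 0, zero_le_one⟩ t ht
  rw [h0, dist_self, mul_zero, dist_comm, dist_eq_zero] at h
  exact h

lemma conical_pt (h0 : ∀ x y, σ x y 0 = x) (h1 : ∀ x y, σ x y 1 = y)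
    (hconvex : ∀ a b c d : X,
      ConvexOn ℝ (Set.Icc (0:ℝ) 1) (fun t => dist (σ a b t) (σ c d t))) :
    ∀ a b c d : X, ∀ t ∈ Set.Icc (0:ℝ) 1,
      dist (σ a b t) (σ c d t) ≤ (1 - t) * dist a c + t * dist b d := by
  intro a b c d t ht
  have h := (hconvex a b c d).2 (Set.left_mem_Icc.2 zero_le_one)
    (Set.right_mem_Icc.2 zero_le_one) (by linarith [ht.2] : (0:ℝ) ≤ 1 - t) ht.1
    (by ring : (1 - t) + t = 1)
  simp only [smul_eq_mul, mul_zero, mul_one, zero_add, h0, h1] at h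
  exact h

lemma sigmaConvex_nbhd (h0 : ∀ x y, σ x y 0 = x) (h1 : ∀ x y, σ x y 1 = y)
    (hconvex : ∀ a b c d : X,
      ConvexOn ℝ (Set.Icc (0:ℝ) 1) (fun t => dist (σ a b t) (σ c d t)))
    {C : Set X} (hCne : C.Nonempty) (hC : SigmaConvex σ C) (r : ℝ) :
    SigmaConvex σ {x | infDist x C ≤ r} := by
  intro x hx y hy t ht
  simp only [Set.mem_setOf_eq] at hx hy ⊢
  refine le_of_forall_pos_le_add fun ε hε => ?_
  obtain ⟨c, hc, hxc⟩ := (infDist_lt_iff hCne).1 (lt_of_le_of_lt hx (by linarith : r < r + ε))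
  obtain ⟨d, hd, hyd⟩ := (infDist_lt_iff hCne).1 (lt_of_le_of_lt hy (by linarith : r < r + ε))
  have h2 := conical_pt h0 h1 hconvex x y c d t ht
  calc infDist (σ x y t) C ≤ dist (σ x y t) (σ c d t) :=
        infDist_le_dist_of_mem (hC c hc d hd t ht)
    _ ≤ (1 - t) * dist x c + t * dist y d := h2
    _ ≤ (1 - t) * (r + ε) + t * (r + ε) := by
        have h3 : (0:ℝ) ≤ 1 - t := by linarith [ht.2]
        have h4 := ht.1
        nlinarith
    _ = r + ε := by ring

lemma isClosed_nbhd (C : Set X) (r : ℝ) : IsClosed {x | infDist x C ≤ r} :=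
  isClosed_le (continuous_infDist_pt C) continuous_const

/-- If every point of `U` is within `ρ` of the closed convex set `cco σ V`,
then so is every point of `cco σ U`. -/
lemma hull_infDist_le (h0 : ∀ x y, σ x y 0 = x) (h1 : ∀ x y, σ x y 1 = y)
    (hconvex : ∀ a b c d : X,
      ConvexOn ℝ (Set.Icc (0:ℝ) 1) (fun t => dist (σ a b t) (σ c d t)))
    {U V : Set X} (hVne : V.Nonempty) {ρ : ℝ}
    (h : ∀ u ∈ U, infDist u (cco σ V) ≤ ρ) :
    ∀ x ∈ cco σ U, infDist x (cco σ V) ≤ ρ := by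
  have hVne' : (cco σ V).Nonempty := hVne.mono (subset_cco V)
  have key : cco σ U ⊆ {x | infDist x (cco σ V) ≤ ρ} :=
    cco_subset (isClosed_nbhd _ _)
      (sigmaConvex_nbhd h0 h1 hconvex hVne' (sigmaConvex_cco V) ρ) h
  exact fun x hx => key hx

end BicombAux

namespace BicombAux

open Metric Set

variable {X : Type*} [MetricSpace X]

/-- The union of geodesic points. -/
def Upts (σ : X → X → ℝ → X) (A B : Set X) (t : ℝ) : Set X :=
  ⋃ a ∈ A, ⋃ b ∈ B, {σ a b t}

variable {σ : X → X → ℝ → X}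

lemma mem_Upts {A B : Set X} {a b : X} {t : ℝ} (ha : a ∈ A) (hb : b ∈ B) :
    σ a b t ∈ Upts σ A B t := by
  simp only [Upts, Set.mem_iUnion, Set.mem_singleton_iff]
  exact ⟨a, ha, b, hb, rfl⟩

lemma mem_Upts_elim {A B : Set X} {t : ℝ} {u : X} (hu : u ∈ Upts σ A B t) :
    ∃ a ∈ A, ∃ b ∈ B, u = σ a b t := by
  simp only [Upts, Set.mem_iUnion, Set.mem_singleton_iff] at hu
  obtain ⟨a, ha, b, hb, h⟩ := hu
  exact ⟨a, ha, b, hb, h⟩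

lemma sigmaConvex_closedBall (h0 : ∀ x y, σ x y 0 = x) (h1 : ∀ x y, σ x y 1 = y)
    (hgeo : ∀ x y, ∀ s ∈ Set.Icc (0:ℝ) 1, ∀ t ∈ Set.Icc (0:ℝ) 1,
      dist (σ x y s) (σ x y t) = |t - s| * dist x y)
    (hconvex : ∀ a b c d : X,
      ConvexOn ℝ (Set.Icc (0:ℝ) 1) (fun t => dist (σ a b t) (σ c d t)))
    (a₀ : X) (R : ℝ) : SigmaConvex σ (Metric.closedBall a₀ R) := by
  intro x hx y hy t ht
  rw [Metric.mem_closedBall] at hx hy ⊢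
  have h2 := conical_pt h0 h1 hconvex x y a₀ a₀ t ht
  rw [sigma_self h0 hgeo a₀ t ht] at h2
  have h3 : (0:ℝ) ≤ 1 - t := by linarith [ht.2]
  have h4 := ht.1
  nlinarith

end BicombAux

/-- The element of CB(X): nonempty, closed, bounded, σ-convex. -/
def MemCB {X : Type*} [MetricSpace X] (σ : X → X → ℝ → X) (A : Set X) : Prop :=
  A.Nonempty ∧ IsClosed A ∧ Bornology.IsBounded A ∧ SigmaConvex σ A

namespace BicombAux

open Metric Set

variable {X : Type*} [MetricSpace X] {σ : X → X → ℝ → X}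

lemma memCB_cco_Upts (h0 : ∀ x y, σ x y 0 = x) (h1 : ∀ x y, σ x y 1 = y)
    (hgeo : ∀ x y, ∀ s ∈ Set.Icc (0:ℝ) 1, ∀ t ∈ Set.Icc (0:ℝ) 1,
      dist (σ x y s) (σ x y t) = |t - s| * dist x y)
    (hconvex : ∀ a b c d : X,
      ConvexOn ℝ (Set.Icc (0:ℝ) 1) (fun t => dist (σ a b t) (σ c d t)))
    {A B : Set X} (hA : MemCB σ A) (hB : MemCB σ B) {t : ℝ} (ht : t ∈ Set.Icc (0:ℝ) 1) :
    MemCB σ (cco σ (Upts σ A B t)) := by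
  obtain ⟨⟨a₁, ha₁⟩, hAcl, hAbd, hAcv⟩ := hA
  obtain ⟨⟨b₁, hb₁⟩, hBcl, hBbd, hBcv⟩ := hB
  refine ⟨⟨σ a₁ b₁ t, subset_cco _ (mem_Upts ha₁ hb₁)⟩, isClosed_cco _, ?_, sigmaConvex_cco _⟩
  -- boundedness
  obtain ⟨R₁, hR₁⟩ := hAbd.subset_closedBall a₁
  obtain ⟨R₂, hR₂⟩ := hBbd.subset_closedBall a₁
  set R := max R₁ R₂ with hR
  have hUsub : Upts σ A B t ⊆ Metric.closedBall a₁ R := by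
    intro u hu
    obtain ⟨a, ha, b, hb, rfl⟩ := mem_Upts_elim hu
    rw [Metric.mem_closedBall]
    have h2 := conical_pt h0 h1 hconvex a b a₁ a₁ t ht
    rw [sigma_self h0 hgeo a₁ t ht] at h2
    have hda : dist a a₁ ≤ R := le_trans (by simpa using hR₁ ha) (le_max_left _ _)
    have hdb : dist b a₁ ≤ R := le_trans (by simpa using hR₂ hb) (le_max_right _ _)
    have h3 : (0:ℝ) ≤ 1 - t := by linarith [ht.2]
    have h4 := ht.1
    nlinarith
  have hsub : cco σ (Upts σ A B t) ⊆ Metric.closedBall a₁ R :=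
    cco_subset Metric.isClosed_closedBall (sigmaConvex_closedBall h0 h1 hgeo hconvex a₁ R) hUsub
  exact (Metric.isBounded_closedBall).subset hsub

lemma endpoint_zero (h0 : ∀ x y, σ x y 0 = x)
    {A B : Set X} (hBne : B.Nonempty) (hAcl : IsClosed A) (hAcv : SigmaConvex σ A) :
    cco σ (Upts σ A B 0) = A := by
  have hU : Upts σ A B 0 = A := by
    ext x
    simp only [Upts, Set.mem_iUnion, Set.mem_singleton_iff, h0]
    constructor
    · rintro ⟨a, ha, b, hb, rfl⟩; exact ha
    · intro hx; obtain ⟨b, hb⟩ := hBne; exact ⟨x, hx, b, hb, rfl⟩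
  rw [hU]
  exact cco_eq_self hAcl hAcv

lemma endpoint_one (h1 : ∀ x y, σ x y 1 = y)
    {A B : Set X} (hAne : A.Nonempty) (hBcl : IsClosed B) (hBcv : SigmaConvex σ B) :
    cco σ (Upts σ A B 1) = B := by
  have hU : Upts σ A B 1 = B := by
    ext x
    simp only [Upts, Set.mem_iUnion, Set.mem_singleton_iff, h1]
    constructor
    · rintro ⟨a, ha, b, hb, rfl⟩; exact hb
    · intro hx; obtain ⟨a, ha⟩ := hAne; exact ⟨a, ha, x, hx, rfl⟩
  rw [hU]
  exact cco_eq_self hBcl hBcv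

end BicombAux

namespace BicombAux

open Metric Set

variable {X : Type*} [MetricSpace X] {σ : X → X → ℝ → X}

/-- Forward per-point geodesic estimate: points of `U_t` are close to the hull at `s` for s < t. -/
lemma geo_pt_fwd (h0 : ∀ x y, σ x y 0 = x) (h1 : ∀ x y, σ x y 1 = y)
    (hgeo : ∀ x y, ∀ s ∈ Set.Icc (0:ℝ) 1, ∀ t ∈ Set.Icc (0:ℝ) 1,
      dist (σ x y s) (σ x y t) = |t - s| * dist x y)
    (hconvex : ∀ a b c d : X,
      ConvexOn ℝ (Set.Icc (0:ℝ) 1) (fun t => dist (σ a b t) (σ c d t)))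
    (hconsistent : ∀ x y : X, ∀ r ∈ Set.Icc (0:ℝ) 1, ∀ s ∈ Set.Icc (0:ℝ) 1,
      ∀ t ∈ Set.Icc (0:ℝ) 1, r < s →
      σ (σ x y r) (σ x y s) t = σ x y ((1 - t) * r + t * s))
    {A B : Set X} (hA : MemCB σ A) (hB : MemCB σ B)
    {s t : ℝ} (hs : s ∈ Set.Icc (0:ℝ) 1) (ht : t ∈ Set.Icc (0:ℝ) 1) (hst : s < t) :
    ∀ u ∈ Upts σ A B t,
      infDist u (cco σ (Upts σ A B s)) ≤ (t - s) * hausdorffDist A B := by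
  intro u hu
  obtain ⟨a, ha, b, hb, rfl⟩ := mem_Upts_elim hu
  refine le_of_forall_pos_le_add fun ε hε => ?_
  have hts : (0:ℝ) < t - s := by linarith
  have hfin : EMetric.hausdorffEdist B A ≠ ⊤ :=
    hausdorffEdist_ne_top_of_nonempty_of_bounded hB.1 hA.1 hB.2.2.1 hA.2.2.1
  have h5 : infDist b A ≤ hausdorffDist A B := by
    rw [hausdorffDist_comm]
    exact infDist_le_hausdorffDist_of_mem hb hfin
  have h5' : infDist b A < hausdorffDist A B + ε / (t - s) := by
    have : (0:ℝ) < ε / (t - s) := div_pos hε hts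
    linarith
  obtain ⟨a', ha', hba'⟩ := (infDist_lt_iff hA.1).1 h5'
  have hs1 : s < 1 := lt_of_lt_of_le hst ht.2
  set θ := (t - s) / (1 - s) with hθdef
  have h1s : (0:ℝ) < 1 - s := by linarith
  have hθ : θ ∈ Set.Icc (0:ℝ) 1 :=
    ⟨div_nonneg (le_of_lt hts) (le_of_lt h1s), (div_le_one h1s).2 (by linarith [ht.2])⟩
  have hcons := hconsistent a b s hs 1 ⟨zero_le_one, le_refl 1⟩ θ hθ hs1
  have harg : (1 - θ) * s + θ * 1 = t := by
    rw [hθdef]; field_simp; ring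
  rw [h1, harg] at hcons
  -- hcons : σ (σ a b s) b θ = σ a b t
  have hpmem : σ a b s ∈ cco σ (Upts σ A B s) := subset_cco _ (mem_Upts ha hb)
  have hqmem : σ a' b s ∈ cco σ (Upts σ A B s) := subset_cco _ (mem_Upts ha' hb)
  have hm : σ (σ a b s) (σ a' b s) θ ∈ cco σ (Upts σ A B s) :=
    sigmaConvex_cco _ _ hpmem _ hqmem θ hθ
  have hd1 : dist (σ a b t) (σ (σ a b s) (σ a' b s) θ) ≤ θ * dist b (σ a' b s) := by
    have h2 := conical_pt h0 h1 hconvex (σ a b s) b (σ a b s) (σ a' b s) θ hθ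
    rw [hcons, dist_self, mul_zero, zero_add] at h2
    exact h2
  have hd2 : dist b (σ a' b s) = (1 - s) * dist a' b := by
    have h3 := hgeo a' b s hs 1 ⟨zero_le_one, le_refl 1⟩
    rw [h1] at h3
    rw [dist_comm, h3, abs_of_pos h1s]
  have hθ1s : θ * (1 - s) = t - s := by
    rw [hθdef]; field_simp
  have hfinal : dist (σ a b t) (σ (σ a b s) (σ a' b s) θ) ≤
      (t - s) * hausdorffDist A B + ε := by
    have hab : dist a' b = dist b a' := dist_comm _ _
    have key : θ * dist b (σ a' b s) ≤ (t - s) * (hausdorffDist A B + ε / (t - s)) := by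
      rw [hd2, ← mul_assoc, hθ1s, hab]
      exact mul_le_mul_of_nonneg_left (le_of_lt hba') (le_of_lt hts)
    have heq : (t - s) * (hausdorffDist A B + ε / (t - s)) =
        (t - s) * hausdorffDist A B + ε := by
      field_simp
    linarith [hd1]
  exact le_trans (infDist_le_dist_of_mem hm) hfinal

/-- Backward per-point geodesic estimate. -/
lemma geo_pt_bwd (h0 : ∀ x y, σ x y 0 = x) (h1 : ∀ x y, σ x y 1 = y)
    (hgeo : ∀ x y, ∀ s ∈ Set.Icc (0:ℝ) 1, ∀ t ∈ Set.Icc (0:ℝ) 1,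
      dist (σ x y s) (σ x y t) = |t - s| * dist x y)
    (hconvex : ∀ a b c d : X,
      ConvexOn ℝ (Set.Icc (0:ℝ) 1) (fun t => dist (σ a b t) (σ c d t)))
    (hconsistent : ∀ x y : X, ∀ r ∈ Set.Icc (0:ℝ) 1, ∀ s ∈ Set.Icc (0:ℝ) 1,
      ∀ t ∈ Set.Icc (0:ℝ) 1, r < s →
      σ (σ x y r) (σ x y s) t = σ x y ((1 - t) * r + t * s))
    {A B : Set X} (hA : MemCB σ A) (hB : MemCB σ B)
    {s t : ℝ} (hs : s ∈ Set.Icc (0:ℝ) 1) (ht : t ∈ Set.Icc (0:ℝ) 1) (hst : s < t) :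
    ∀ u ∈ Upts σ A B s,
      infDist u (cco σ (Upts σ A B t)) ≤ (t - s) * hausdorffDist A B := by
  intro u hu
  obtain ⟨a, ha, b, hb, rfl⟩ := mem_Upts_elim hu
  refine le_of_forall_pos_le_add fun ε hε => ?_
  have hts : (0:ℝ) < t - s := by linarith
  have ht0 : (0:ℝ) < t := lt_of_le_of_lt hs.1 hst
  have hfin : EMetric.hausdorffEdist A B ≠ ⊤ :=
    hausdorffEdist_ne_top_of_nonempty_of_bounded hA.1 hB.1 hA.2.2.1 hB.2.2.1
  have h5 : infDist a B ≤ hausdorffDist A B := infDist_le_hausdorffDist_of_mem ha hfin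
  have h5' : infDist a B < hausdorffDist A B + ε / (t - s) := by
    have : (0:ℝ) < ε / (t - s) := div_pos hε hts
    linarith
  obtain ⟨b', hb', hab'⟩ := (infDist_lt_iff hB.1).1 h5'
  set θ := s / t with hθdef
  have hθ : θ ∈ Set.Icc (0:ℝ) 1 :=
    ⟨div_nonneg hs.1 (le_of_lt ht0), (div_le_one ht0).2 (le_of_lt hst)⟩
  have hcons := hconsistent a b 0 ⟨le_refl 0, zero_le_one⟩ t ht θ hθ ht0
  have harg : (1 - θ) * 0 + θ * t = s := by
    rw [hθdef]; field_simp; ring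
  rw [h0, harg] at hcons
  -- hcons : σ a (σ a b t) θ = σ a b s
  have hpmem : σ a b' t ∈ cco σ (Upts σ A B t) := subset_cco _ (mem_Upts ha hb')
  have hqmem : σ a b t ∈ cco σ (Upts σ A B t) := subset_cco _ (mem_Upts ha hb)
  have hm : σ (σ a b' t) (σ a b t) θ ∈ cco σ (Upts σ A B t) :=
    sigmaConvex_cco _ _ hpmem _ hqmem θ hθ
  have hd1 : dist (σ a b s) (σ (σ a b' t) (σ a b t) θ) ≤ (1 - θ) * dist a (σ a b' t) := by
    have h2 := conical_pt h0 h1 hconvex a (σ a b t) (σ a b' t) (σ a b t) θ hθ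
    rw [hcons, dist_self, mul_zero, add_zero] at h2
    exact h2
  have hd2 : dist a (σ a b' t) = t * dist a b' := by
    have h3 := hgeo a b' 0 ⟨le_refl 0, zero_le_one⟩ t ht
    rw [h0, sub_zero, abs_of_pos ht0] at h3
    exact h3
  have hθ1t : (1 - θ) * t = t - s := by
    rw [hθdef]; field_simp
  have hfinal : dist (σ a b s) (σ (σ a b' t) (σ a b t) θ) ≤
      (t - s) * hausdorffDist A B + ε := by
    have key : (1 - θ) * dist a (σ a b' t) ≤ (t - s) * (hausdorffDist A B + ε / (t - s)) := by
      rw [hd2, ← mul_assoc, hθ1t]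
      exact mul_le_mul_of_nonneg_left (le_of_lt hab') (le_of_lt hts)
    have heq : (t - s) * (hausdorffDist A B + ε / (t - s)) =
        (t - s) * hausdorffDist A B + ε := by
      field_simp
    linarith [hd1]
  exact le_trans (infDist_le_dist_of_mem hm) hfinal

end BicombAux

namespace BicombAux

open Metric Set

variable {X : Type*} [MetricSpace X] {σ : X → X → ℝ → X}

lemma Upts_nonempty {A B : Set X} (hA : A.Nonempty) (hB : B.Nonempty) (t : ℝ) :
    (Upts σ A B t).Nonempty := by
  obtain ⟨a, ha⟩ := hA; obtain ⟨b, hb⟩ := hB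
  exact ⟨σ a b t, mem_Upts ha hb⟩

lemma geo_le (h0 : ∀ x y, σ x y 0 = x) (h1 : ∀ x y, σ x y 1 = y)
    (hgeo : ∀ x y, ∀ s ∈ Set.Icc (0:ℝ) 1, ∀ t ∈ Set.Icc (0:ℝ) 1,
      dist (σ x y s) (σ x y t) = |t - s| * dist x y)
    (hconvex : ∀ a b c d : X,
      ConvexOn ℝ (Set.Icc (0:ℝ) 1) (fun t => dist (σ a b t) (σ c d t)))
    (hconsistent : ∀ x y : X, ∀ r ∈ Set.Icc (0:ℝ) 1, ∀ s ∈ Set.Icc (0:ℝ) 1,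
      ∀ t ∈ Set.Icc (0:ℝ) 1, r < s →
      σ (σ x y r) (σ x y s) t = σ x y ((1 - t) * r + t * s))
    {A B : Set X} (hA : MemCB σ A) (hB : MemCB σ B)
    {s t : ℝ} (hs : s ∈ Set.Icc (0:ℝ) 1) (ht : t ∈ Set.Icc (0:ℝ) 1) (hst : s ≤ t) :
    hausdorffDist (cco σ (Upts σ A B s)) (cco σ (Upts σ A B t)) ≤
      (t - s) * hausdorffDist A B := by
  rcases eq_or_lt_of_le hst with rfl | hlt
  · simp [hausdorffDist_self_zero]
  · have hρ : (0:ℝ) ≤ (t - s) * hausdorffDist A B :=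
      mul_nonneg (by linarith) hausdorffDist_nonneg
    refine hausdorffDist_le_of_infDist hρ ?_ ?_
    · exact hull_infDist_le h0 h1 hconvex (Upts_nonempty hA.1 hB.1 t)
        (geo_pt_bwd h0 h1 hgeo hconvex hconsistent hA hB hs ht hlt)
    · exact hull_infDist_le h0 h1 hconvex (Upts_nonempty hA.1 hB.1 s)
        (geo_pt_fwd h0 h1 hgeo hconvex hconsistent hA hB hs ht hlt)

lemma conical_pt_hull (h0 : ∀ x y, σ x y 0 = x) (h1 : ∀ x y, σ x y 1 = y)
    (hconvex : ∀ a b c d : X,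
      ConvexOn ℝ (Set.Icc (0:ℝ) 1) (fun t => dist (σ a b t) (σ c d t)))
    {A B C D : Set X} (hA : MemCB σ A) (hB : MemCB σ B) (hC : MemCB σ C) (hD : MemCB σ D)
    {t : ℝ} (ht : t ∈ Set.Icc (0:ℝ) 1) :
    ∀ u ∈ Upts σ A B t, infDist u (cco σ (Upts σ C D t)) ≤
      (1 - t) * hausdorffDist A C + t * hausdorffDist B D := by
  intro u hu
  obtain ⟨a, ha, b, hb, rfl⟩ := mem_Upts_elim hu
  refine le_of_forall_pos_le_add fun ε hε => ?_
  have hfinAC : EMetric.hausdorffEdist A C ≠ ⊤ :=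
    hausdorffEdist_ne_top_of_nonempty_of_bounded hA.1 hC.1 hA.2.2.1 hC.2.2.1
  have hfinBD : EMetric.hausdorffEdist B D ≠ ⊤ :=
    hausdorffEdist_ne_top_of_nonempty_of_bounded hB.1 hD.1 hB.2.2.1 hD.2.2.1
  have h5 : infDist a C < hausdorffDist A C + ε :=
    lt_of_le_of_lt (infDist_le_hausdorffDist_of_mem ha hfinAC) (by linarith)
  have h6 : infDist b D < hausdorffDist B D + ε :=
    lt_of_le_of_lt (infDist_le_hausdorffDist_of_mem hb hfinBD) (by linarith)
  obtain ⟨c, hc, hac⟩ := (infDist_lt_iff hC.1).1 h5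
  obtain ⟨d, hd, hbd⟩ := (infDist_lt_iff hD.1).1 h6
  have hmem : σ c d t ∈ cco σ (Upts σ C D t) := subset_cco _ (mem_Upts hc hd)
  have h2 := conical_pt h0 h1 hconvex a b c d t ht
  have h3 : (0:ℝ) ≤ 1 - t := by linarith [ht.2]
  have h4 := ht.1
  calc infDist (σ a b t) (cco σ (Upts σ C D t)) ≤ dist (σ a b t) (σ c d t) :=
        infDist_le_dist_of_mem hmem
    _ ≤ (1 - t) * dist a c + t * dist b d := h2
    _ ≤ (1 - t) * (hausdorffDist A C + ε) + t * (hausdorffDist B D + ε) := by nlinarith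
    _ = (1 - t) * hausdorffDist A C + t * hausdorffDist B D + ε := by ring

lemma conical_sets (h0 : ∀ x y, σ x y 0 = x) (h1 : ∀ x y, σ x y 1 = y)
    (hconvex : ∀ a b c d : X,
      ConvexOn ℝ (Set.Icc (0:ℝ) 1) (fun t => dist (σ a b t) (σ c d t)))
    {A B C D : Set X} (hA : MemCB σ A) (hB : MemCB σ B) (hC : MemCB σ C) (hD : MemCB σ D)
    {t : ℝ} (ht : t ∈ Set.Icc (0:ℝ) 1) :
    hausdorffDist (cco σ (Upts σ A B t)) (cco σ (Upts σ C D t)) ≤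
      (1 - t) * hausdorffDist A C + t * hausdorffDist B D := by
  have h3 : (0:ℝ) ≤ 1 - t := by linarith [ht.2]
  have hρ : (0:ℝ) ≤ (1 - t) * hausdorffDist A C + t * hausdorffDist B D :=
    add_nonneg (mul_nonneg h3 hausdorffDist_nonneg) (mul_nonneg ht.1 hausdorffDist_nonneg)
  refine hausdorffDist_le_of_infDist hρ ?_ ?_
  · exact hull_infDist_le h0 h1 hconvex (Upts_nonempty hC.1 hD.1 t)
      (conical_pt_hull h0 h1 hconvex hA hB hC hD ht)
  · have h := conical_pt_hull h0 h1 hconvex hC hD hA hB ht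
    rw [hausdorffDist_comm (s := C), hausdorffDist_comm (s := D)] at h
    exact hull_infDist_le h0 h1 hconvex (Upts_nonempty hA.1 hB.1 t) h

end BicombAux

open Metric

/-- Σ(A,B,t) = cco(⋃ σ(a,b,t)) defines a conical geodesic
bicombing on CB(X) with the Hausdorff metric. -/
theorem conical_bicombing_on_CB {X : Type*} [MetricSpace X]
    (σ : X → X → ℝ → X)
    (h0 : ∀ x y, σ x y 0 = x) (h1 : ∀ x y, σ x y 1 = y)
    (hgeo : ∀ x y, ∀ s ∈ Set.Icc (0:ℝ) 1, ∀ t ∈ Set.Icc (0:ℝ) 1,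
      dist (σ x y s) (σ x y t) = |t - s| * dist x y)
    (hconvex : ∀ a b c d : X,
      ConvexOn ℝ (Set.Icc (0:ℝ) 1) (fun t => dist (σ a b t) (σ c d t)))
    (hconsistent : ∀ x y : X, ∀ r ∈ Set.Icc (0:ℝ) 1, ∀ s ∈ Set.Icc (0:ℝ) 1,
      ∀ t ∈ Set.Icc (0:ℝ) 1, r < s →
      σ (σ x y r) (σ x y s) t = σ x y ((1 - t) * r + t * s))
    (Sig : Set X → Set X → ℝ → Set X)
    (hSig : Sig = fun A B t => cco σ (⋃ a ∈ A, ⋃ b ∈ B, {σ a b t})) :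
    (∀ A B : Set X, MemCB σ A → MemCB σ B →
      (∀ t ∈ Set.Icc (0:ℝ) 1, MemCB σ (Sig A B t)) ∧
      Sig A B 0 = A ∧ Sig A B 1 = B ∧
      (∀ s ∈ Set.Icc (0:ℝ) 1, ∀ t ∈ Set.Icc (0:ℝ) 1,
        Metric.hausdorffDist (Sig A B s) (Sig A B t) =
          |t - s| * Metric.hausdorffDist A B)) ∧
    (∀ A B C D : Set X, MemCB σ A → MemCB σ B → MemCB σ C → MemCB σ D →
      ∀ t ∈ Set.Icc (0:ℝ) 1,
        Metric.hausdorffDist (Sig A B t) (Sig C D t) ≤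
          (1 - t) * Metric.hausdorffDist A C + t * Metric.hausdorffDist B D) := by
  have hSig' : Sig = fun A B t => cco σ (BicombAux.Upts σ A B t) := hSig
  simp only [hSig']
  constructor
  · intro A B hA hB
    refine ⟨fun t ht => BicombAux.memCB_cco_Upts h0 h1 hgeo hconvex hA hB ht,
      BicombAux.endpoint_zero h0 hB.1 hA.2.1 hA.2.2.2,
      BicombAux.endpoint_one h1 hA.1 hB.2.1 hB.2.2.2, ?_⟩
    have key : ∀ s ∈ Set.Icc (0:ℝ) 1, ∀ t ∈ Set.Icc (0:ℝ) 1, s ≤ t →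
        hausdorffDist (cco σ (BicombAux.Upts σ A B s)) (cco σ (BicombAux.Upts σ A B t))
          = (t - s) * hausdorffDist A B := by
      intro s hs t ht hst
      refine le_antisymm
        (BicombAux.geo_le h0 h1 hgeo hconvex hconsistent hA hB hs ht hst) ?_
      set S : ℝ → Set X := fun u => cco σ (BicombAux.Upts σ A B u) with hSdef
      have hmem : ∀ u ∈ Set.Icc (0:ℝ) 1, MemCB σ (S u) := fun u hu =>
        BicombAux.memCB_cco_Upts h0 h1 hgeo hconvex hA hB hu
      have h0m : (0:ℝ) ∈ Set.Icc (0:ℝ) 1 := Set.left_mem_Icc.2 zero_le_one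
      have h1m : (1:ℝ) ∈ Set.Icc (0:ℝ) 1 := Set.right_mem_Icc.2 zero_le_one
      have fin1 : EMetric.hausdorffEdist (S 0) (S s) ≠ ⊤ :=
        hausdorffEdist_ne_top_of_nonempty_of_bounded (hmem 0 h0m).1 (hmem s hs).1
          (hmem 0 h0m).2.2.1 (hmem s hs).2.2.1
      have fin2 : EMetric.hausdorffEdist (S s) (S t) ≠ ⊤ :=
        hausdorffEdist_ne_top_of_nonempty_of_bounded (hmem s hs).1 (hmem t ht).1
          (hmem s hs).2.2.1 (hmem t ht).2.2.1
      have tri1 : hausdorffDist (S 0) (S 1) ≤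
          hausdorffDist (S 0) (S s) + hausdorffDist (S s) (S 1) :=
        hausdorffDist_triangle fin1
      have tri2 : hausdorffDist (S s) (S 1) ≤
          hausdorffDist (S s) (S t) + hausdorffDist (S t) (S 1) :=
        hausdorffDist_triangle fin2
      have e0 : S 0 = A := BicombAux.endpoint_zero h0 hB.1 hA.2.1 hA.2.2.2
      have e1 : S 1 = B := BicombAux.endpoint_one h1 hA.1 hB.2.1 hB.2.2.2
      have hb1 : hausdorffDist (S 0) (S s) ≤ (s - 0) * hausdorffDist A B :=
        BicombAux.geo_le h0 h1 hgeo hconvex hconsistent hA hB h0m hs hs.1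
      have hb2 : hausdorffDist (S t) (S 1) ≤ (1 - t) * hausdorffDist A B :=
        BicombAux.geo_le h0 h1 hgeo hconvex hconsistent hA hB ht h1m ht.2
      rw [e0] at tri1 hb1
      rw [e1] at tri1 tri2 hb2
      show (t - s) * hausdorffDist A B ≤ hausdorffDist (S s) (S t)
      nlinarith [tri1, tri2, hb1, hb2]
    intro s hs t ht
    rcases le_total s t with h | h
    · rw [key s hs t ht h, abs_of_nonneg (by linarith : (0:ℝ) ≤ t - s)]
    · rw [hausdorffDist_comm, key t ht s hs h,
        abs_of_nonpos (by linarith : t - s ≤ 0)]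
      ring
  · intro A B C D hA hB hC hD t ht
    exact BicombAux.conical_sets h0 h1 hconvex hA hB hC hD ht
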